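/- Let $v = (v_1, \ldots, v_d) \in \mathbb{C}^d$ with $|v_k| \leq 1$ for all $k$, and let $M(v)$ be the $d \times d$ matrix whose off-diagonal entries agree with those of $vv^*$ and whose diagonal entries all equal 1. Then $M(v)$ lies in the closed convex hull of rank-one correlation matrices $zz^*$ with $|z_i| = 1$. -/

import Mathlib

open Matrix

/-- If `v ∈ ℂ^d` with `|v_k| ≤ 1` for all `k`, then the matrix `M(v)` whose
off-diagonal entries agree with `v v*` and whose diagonal entries are all `1`
lies in the closed convex hull of the rank-one correlation matrices `z z*`
with all `|zᵢ| = 1`. -/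
theorem Mv_mem_closed_convex_hull_rank_one (d : ℕ)
    (v : Fin d → ℂ) (hv : ∀ k, ‖v k‖ ≤ 1)
    (M : Matrix (Fin d) (Fin d) ℂ)
    (hM : M = Matrix.of fun i j => if i = j then (1 : ℂ) else v i * star (v j)) :
    M ∈ closure (convexHull ℝ {A : Matrix (Fin d) (Fin d) ℂ |
      ∃ z : Fin d → ℂ, (∀ i, ‖z i‖ = 1) ∧ A = Matrix.of fun i j => z i * star (z j)}) := by
  apply subset_closure
  -- unimodular directions
  set z : Fin d → ℂ := fun k => if v k = 0 then 1 else v k / ‖v k‖ with hz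
  have hznorm : ∀ k, ‖z k‖ = 1 := by
    intro k
    simp only [hz]
    split_ifs with h
    · simp
    · rw [norm_div, Complex.norm_real, norm_norm, div_self]
      simpa [norm_eq_zero] using h
  have hvz : ∀ k, v k = (‖v k‖ : ℂ) * z k := by
    intro k
    simp only [hz]
    split_ifs with h
    · simp [h]
    · have hne : (‖v k‖ : ℂ) ≠ 0 := by
        simpa [norm_eq_zero] using h
      rw [mul_div_cancel₀ _ hne]
  -- weights on Bool
  set p : Fin d → Bool → ℝ := fun k b => if b then (1 + ‖v k‖) / 2 else (1 - ‖v k‖) / 2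
    with hp
  have hp0 : ∀ k b, 0 ≤ p k b := by
    intro k b
    cases b <;> simp [hp] <;>
      linarith [hv k, norm_nonneg (v k)]
  have hpsum : ∀ k, ∑ b : Bool, p k b = 1 := by
    intro k; simp [hp]; ring
  -- sign function
  set s : Bool → ℂ := fun b => if b then 1 else -1 with hs
  -- weights and vectors indexed by sign patterns
  set w : (Fin d → Bool) → ℝ := fun ε => ∏ k, p k (ε k) with hw
  set Z : (Fin d → Bool) → Fin d → ℂ := fun ε k => s (ε k) * z k with hZ
  set A : (Fin d → Bool) → Matrix (Fin d) (Fin d) ℂ :=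
    fun ε => Matrix.of fun i j => Z ε i * star (Z ε j) with hA
  have hw0 : ∀ ε, 0 ≤ w ε := fun ε => Finset.prod_nonneg fun k _ => hp0 k (ε k)
  have hwsum : ∑ ε : Fin d → Bool, w ε = 1 := by
    rw [hw, ← Fintype.prod_sum]
    refine Finset.prod_eq_one fun k _ => ?_
    simpa using hpsum k
  have hmem : ∀ ε, A ε ∈ {A : Matrix (Fin d) (Fin d) ℂ |
      ∃ z : Fin d → ℂ, (∀ i, ‖z i‖ = 1) ∧ A = Matrix.of fun i j => z i * star (z j)} := by
    intro ε
    refine ⟨Z ε, fun i => ?_, rfl⟩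
    rw [hZ]
    simp only [norm_mul, hznorm i, mul_one, hs]
    cases ε i <;> simp
  -- key identity
  have key : M = ∑ ε : Fin d → Bool, w ε • A ε := by
    ext i j
    rw [hM]
    simp only [Matrix.sum_apply, Matrix.smul_apply, hA, Matrix.of_apply, smul_eq_mul,
      Complex.real_smul]
    by_cases hij : i = j
    · subst hij
      have : ∀ ε : Fin d → Bool, (w ε : ℂ) * (Z ε i * star (Z ε i)) = (w ε : ℂ) := by
        intro ε
        have hs1 : s (ε i) * star (s (ε i)) = 1 := by
          rw [hs]; cases ε i <;> simp
        have h1 : z i * star (z i) = 1 := by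
          have hn : Complex.normSq (z i) = 1 := by
            rw [Complex.normSq_eq_norm_sq, hznorm i]; norm_num
          rw [Complex.star_def, Complex.mul_conj, hn, Complex.ofReal_one]
        have hZ1 : Z ε i * star (Z ε i) =
            (s (ε i) * star (s (ε i))) * (z i * star (z i)) := by
          rw [hZ]; simp only [star_mul']; ring
        rw [hZ1, hs1, h1, one_mul, mul_one]
      simp only [this, if_true]
      rw [← Complex.ofReal_sum, hwsum, Complex.ofReal_one]
    · simp only [if_neg hij]
      have factor : ∀ ε : Fin d → Bool,
          (w ε : ℂ) * (Z ε i * star (Z ε j)) =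
          (∏ k, ((p k (ε k) : ℂ) * (if k = i ∨ k = j then s (ε k) else 1))) *
            (z i * star (z j)) := by
        intro ε
        have hsj : star (s (ε j)) = s (ε j) := by rw [hs]; cases ε j <;> simp
        rw [hw, hZ]
        push_cast
        rw [Finset.prod_mul_distrib]
        have : ∏ k, (if k = i ∨ k = j then s (ε k) else 1) = s (ε i) * s (ε j) := by
          have hiff : ∀ k : Fin d, (k = i ∨ k = j) ↔ k ∈ ({i, j} : Finset (Fin d)) := by
            intro k; simp
          rw [Finset.prod_congr rfl (fun k _ => by rw [if_congr (hiff k) rfl rfl]),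
            Finset.prod_ite_mem, Finset.univ_inter, Finset.prod_pair hij]
        rw [this]
        simp only [star_mul', hsj]
        ring
      simp only [factor, ← Finset.sum_mul]
      rw [← Fintype.prod_sum
        (fun (k : Fin d) (b : Bool) => ((p k b : ℂ) * if k = i ∨ k = j then s b else 1))]
      have hk : ∀ k : Fin d,
          (∑ b : Bool, (p k b : ℂ) * (if k = i ∨ k = j then s b else 1)) =
          if k = i ∨ k = j then (‖v k‖ : ℂ) else 1 := by
        intro k
        by_cases h : k = i ∨ k = j <;>
          simp only [h, if_true, if_false, hs, hp, Fintype.sum_bool,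
            Bool.false_eq_true, mul_one, mul_neg_one] <;>
          push_cast <;> ring
      rw [Finset.prod_congr rfl (fun k _ => hk k)]
      have hiff : ∀ k : Fin d, (k = i ∨ k = j) ↔ k ∈ ({i, j} : Finset (Fin d)) := by
        intro k; simp
      rw [Finset.prod_congr rfl (fun k _ => by rw [if_congr (hiff k) rfl rfl]),
        Finset.prod_ite_mem, Finset.univ_inter, Finset.prod_pair hij]
      conv_lhs => rw [hvz i, hvz j]
      simp only [star_mul', Complex.star_def, Complex.conj_ofReal]
      ring
  rw [key]
  have := Finset.centerMass_mem_convexHull (R := ℝ) Finset.univ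
    (w := w) (fun ε _ => hw0 ε) (by rw [hwsum]; norm_num)
    (z := A) (fun ε _ => hmem ε)
  rwa [Finset.centerMass_eq_of_sum_1 _ _ hwsum] at this
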